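/- Every element of Loop(V) has a unique minimal representative ((u_1,v_1), ..., (u_n,v_n)) satisfying: (1) for each i, u_i and v_i are linearly independent; (2) for each i < n, either v_i ≠ u_{i+1}, or v_i − u_i and v_{i+1} − u_{i+1} are linearly independent. -/

import Mathlib

/-!
STATEMENT 9: Every element of `Loop(V)` has a unique minimal representative
`((u₁,v₁), …, (uₙ,vₙ))` with each `uᵢ, vᵢ` linearly independent, and for each `i < n`
either `vᵢ ≠ u_{i+1}` or `vᵢ − uᵢ` and `v_{i+1} − u_{i+1}` are linearly independent.
-/

open FreeMonoid

variable (V : Type*) [AddCommGroup V] [Module ℝ V]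

/-- The defining relations of `Loop(V)` on the free monoid over `V × V`. -/
inductive LoopRel : FreeMonoid (V × V) → FreeMonoid (V × V) → Prop
  | comp (v u r : V) (h : Collinear ℝ ({v, u, r} : Set V)) :
      LoopRel (of (v, u) * of (u, r)) (of (v, r))
  | triv (v u : V) (h : ¬ LinearIndependent ℝ ![v, u]) :
      LoopRel (of (v, u)) 1

/-- The group `Loop(V)` generated by triangular loops. -/
abbrev LoopGrp := (conGen (LoopRel V)).Quotient

variable {V}

/-- The quotient map `FMon(V × V) → Loop(V)`. -/
abbrev Loopmk : FreeMonoid (V × V) →* LoopGrp V := (conGen (LoopRel V)).mk'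

/-- Minimal words in `Loop(V)`: no rewriting step applies. -/
def IsMinLoopWord (l : List (V × V)) : Prop :=
  (∀ p ∈ l, LinearIndependent ℝ ![p.1, p.2]) ∧
  l.Chain' (fun p q => p.2 ≠ q.1 ∨ LinearIndependent ℝ ![p.2 - p.1, q.2 - q.1])

lemma notLI_iff {a b : V} :
    ¬ LinearIndependent ℝ ![a, b] ↔ ∃ c d : ℝ, c • a + d • b = 0 ∧ (c ≠ 0 ∨ d ≠ 0) := by
  rw [LinearIndependent.pair_iff]
  push_neg
  constructor
  · rintro ⟨c, d, h1, h2⟩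
    exact ⟨c, d, h1, by by_cases hc : c = 0 <;> tauto⟩
  · rintro ⟨c, d, h1, h2⟩
    exact ⟨c, d, h1, by tauto⟩

lemma dep_smul (s t : ℝ) (d : V) : ¬ LinearIndependent ℝ ![s • d, t • d] := by
  intro h
  by_cases hs : s = 0
  · exact h.ne_zero 0 (by simp [hs])
  · have := LinearIndependent.pair_iff.1 h t (-s) (by module)
    exact hs (neg_eq_zero.1 this.2)

lemma dep_self (u : V) : ¬ LinearIndependent ℝ ![u, u] := by
  simpa using dep_smul 1 1 u

lemma li_symm {a b : V} (h : LinearIndependent ℝ ![a, b]) : LinearIndependent ℝ ![b, a] := by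
  rw [LinearIndependent.pair_iff] at h ⊢
  intro s t hst
  have := h t s (by rw [← hst]; abel)
  tauto

lemma dep_symm {a b : V} (h : ¬ LinearIndependent ℝ ![a, b]) :
    ¬ LinearIndependent ℝ ![b, a] := fun h' => h (li_symm h')

lemma exists_smul {v u : V} (h : ¬ LinearIndependent ℝ ![v, u]) (hu : u ≠ 0) :
    ∃ s : ℝ, v = s • u := by
  obtain ⟨c, d, hcd, hne⟩ := notLI_iff.1 h
  by_cases hc : c = 0
  · exfalso
    rw [hc, zero_smul, zero_add] at hcd
    rcases smul_eq_zero.1 hcd with h | h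
    · exact (hne.resolve_left (by simp [hc])) h
    · exact hu h
  · refine ⟨-(d/c), ?_⟩
    have h1 : c • v = -(d • u) := by rw [eq_neg_iff_add_eq_zero]; exact hcd
    calc v = c⁻¹ • (c • v) := (inv_smul_smul₀ hc v).symm
      _ = c⁻¹ • (-(d • u)) := by rw [h1]
      _ = (-(d/c)) • u := by match_scalars; field_simp

lemma collinear_triple_iff {v u r : V} :
    Collinear ℝ ({v, u, r} : Set V) ↔ ∃ (d : V) (a b : ℝ), u = a • d + v ∧ r = b • d + v := by
  rw [collinear_iff_of_mem (Set.mem_insert v _)]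
  constructor
  · rintro ⟨d, hd⟩
    obtain ⟨a, ha⟩ := hd u (by simp)
    obtain ⟨b, hb⟩ := hd r (by simp)
    exact ⟨d, a, b, by simpa [vadd_eq_add] using ha, by simpa [vadd_eq_add] using hb⟩
  · rintro ⟨d, a, b, hu, hr⟩
    refine ⟨d, ?_⟩
    rintro p hp
    simp only [Set.mem_insert_iff, Set.mem_singleton_iff] at hp
    rcases hp with rfl | rfl | rfl
    · exact ⟨0, by simp [vadd_eq_add]⟩
    · exact ⟨a, by simp [vadd_eq_add, hu]⟩
    · exact ⟨b, by simp [vadd_eq_add, hr]⟩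

lemma collinear_dep {v u r : V} (h : Collinear ℝ ({v, u, r} : Set V)) :
    ¬ LinearIndependent ℝ ![u - v, r - u] := by
  obtain ⟨d, a, b, hu, hr⟩ := collinear_triple_iff.1 h
  have h1 : u - v = a • d := by rw [hu]; abel
  have h2 : r - u = (b - a) • d := by rw [hu, hr, sub_smul]; abel
  rw [h1, h2]; exact dep_smul _ _ _

lemma collinear_of_dep {v u r : V} (h : ¬ LinearIndependent ℝ ![u - v, r - u]) :
    Collinear ℝ ({v, u, r} : Set V) := by
  obtain ⟨c, e, hce, hne⟩ := notLI_iff.1 h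
  by_cases he : e = 0
  · have hc : c ≠ 0 := hne.resolve_right (by simp [he])
    have huv : u = v := by
      rw [he, zero_smul, add_zero] at hce
      rcases smul_eq_zero.1 hce with h' | h'
      · exact absurd h' hc
      · exact sub_eq_zero.1 h'
    subst huv
    refine collinear_triple_iff.2 ⟨r - u, 0, 1, by simp, by simp⟩
  · have h1 : e • (r - u) = -(c • (u - v)) := by
      rw [eq_neg_iff_add_eq_zero, add_comm]; exact hce
    have h4 : r - u = (e⁻¹ * -c) • (u - v) := by
      calc r - u = e⁻¹ • (e • (r - u)) := (inv_smul_smul₀ he _).symm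
        _ = e⁻¹ • (-(c • (u - v))) := by rw [h1]
        _ = (e⁻¹ * -c) • (u - v) := by rw [smul_neg, smul_smul, mul_neg, neg_smul]
    refine collinear_triple_iff.2 ⟨u - v, 1, 1 + e⁻¹ * -c, by simp, ?_⟩
    have : r = (u - v) + (r - u) + v := by abel
    rw [this, h4, add_smul, one_smul]

lemma eq_of_dep_li {v u r : V} (hvu : ¬ LinearIndependent ℝ ![v, u])
    (hur : LinearIndependent ℝ ![u, r]) (hcol : Collinear ℝ ({v, u, r} : Set V)) : v = u := by
  have hu : u ≠ 0 := fun h => hur.ne_zero 0 (by simp [h])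
  obtain ⟨s, rfl⟩ := exists_smul hvu hu
  obtain ⟨d, a, b, hu', hr⟩ := collinear_triple_iff.1 hcol
  have h1 : (1 - s) • u = a • d := by
    rw [sub_smul, one_smul]
    nth_rewrite 1 [hu']
    abel
  by_cases ha : a = 0
  · rw [ha, zero_smul] at h1
    rcases smul_eq_zero.1 h1 with h' | h'
    · have : s = 1 := by linarith [sub_eq_zero.1 (by linarith [h'] : (1:ℝ) - s = 0)]
      rw [this, one_smul]
    · exact absurd h' hu
  · exfalso
    have hd : d = (a⁻¹ * (1 - s)) • u := by
      rw [mul_smul, h1, inv_smul_smul₀ ha]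
    have hr' : r = (b * (a⁻¹ * (1 - s)) + s) • u := by
      rw [hr, hd, smul_smul, add_smul]
    have : ¬ LinearIndependent ℝ ![u, r] := by
      rw [hr']
      simpa using dep_smul (1:ℝ) (b * (a⁻¹ * (1 - s)) + s) u
    exact this hur

lemma dep_dep {v u r : V} (hvu : ¬ LinearIndependent ℝ ![v, u])
    (hur : ¬ LinearIndependent ℝ ![u, r]) (hcol : Collinear ℝ ({v, u, r} : Set V)) :
    ¬ LinearIndependent ℝ ![v, r] := by
  by_cases hu : u = 0
  · subst hu
    obtain ⟨d, a, b, h0, hr⟩ := collinear_triple_iff.1 hcol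
    have hv : v = (-a) • d := by
      rw [neg_smul, eq_neg_iff_add_eq_zero, add_comm]; exact h0.symm
    have hr' : r = (b + -a) • d := by rw [hr, hv, add_smul]
    rw [hv, hr']
    exact dep_smul _ _ _
  · obtain ⟨s, rfl⟩ := exists_smul hvu hu
    obtain ⟨t, ht⟩ := exists_smul (dep_symm hur) hu
    rw [ht]
    exact dep_smul _ _ _

lemma eq_of_li_dep {v u r : V} (hvu : LinearIndependent ℝ ![v, u])
    (hur : ¬ LinearIndependent ℝ ![u, r]) (hcol : Collinear ℝ ({v, u, r} : Set V)) : r = u :=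
  eq_of_dep_li (dep_symm hur) (li_symm hvu)
    (hcol.subset (by intro x hx; simp only [Set.mem_insert_iff, Set.mem_singleton_iff] at hx ⊢; tauto))

lemma collinear4 {p v u r : V} (h1 : Collinear ℝ ({p, v, u} : Set V))
    (h2 : Collinear ℝ ({v, u, r} : Set V)) (hne : v ≠ u) :
    Collinear ℝ ({p, v, u, r} : Set V) :=
  (h2.collinear_insert_iff_of_ne (by simp) (by simp) hne).2 h1


open Classical in
/-- Push one generator onto a reversed minimal word, rewriting as needed. -/
noncomputable def pushRev : List (V × V) → V × V → List (V × V)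
  | m, x =>
    if LinearIndependent ℝ ![x.1, x.2] then
      match m with
      | [] => [x]
      | y :: rest =>
        if y.2 = x.1 ∧ ¬ LinearIndependent ℝ ![y.2 - y.1, x.2 - x.1] then
          pushRev rest (y.1, x.2)
        else x :: y :: rest
    else m

lemma pushRev_neg (m : List (V × V)) (x : V × V) (h : ¬ LinearIndependent ℝ ![x.1, x.2]) :
    pushRev m x = m := by
  cases m <;> simp [pushRev, h]

lemma pushRev_nil (x : V × V) (h : LinearIndependent ℝ ![x.1, x.2]) :
    pushRev [] x = [x] := by
  simp [pushRev, h]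

lemma pushRev_combine {y x : V × V} (rest : List (V × V))
    (h : LinearIndependent ℝ ![x.1, x.2]) (h2 : y.2 = x.1)
    (h3 : ¬ LinearIndependent ℝ ![y.2 - y.1, x.2 - x.1]) :
    pushRev (y :: rest) x = pushRev rest (y.1, x.2) := by
  simp only [pushRev, if_pos h]
  rw [if_pos ⟨h2, h3⟩]

lemma pushRev_keep {y x : V × V} (rest : List (V × V))
    (h : LinearIndependent ℝ ![x.1, x.2])
    (h2 : ¬ (y.2 = x.1 ∧ ¬ LinearIndependent ℝ ![y.2 - y.1, x.2 - x.1])) :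
    pushRev (y :: rest) x = x :: y :: rest := by
  simp only [pushRev, if_pos h]
  rw [if_neg h2]

attribute [irreducible] pushRev

/-- Minimality for reversed words. -/
def RMin (m : List (V × V)) : Prop :=
  (∀ p ∈ m, LinearIndependent ℝ ![p.1, p.2]) ∧
  m.Chain' (fun a b => b.2 ≠ a.1 ∨ LinearIndependent ℝ ![b.2 - b.1, a.2 - a.1])

lemma rmin_iff {m : List (V × V)} : RMin m ↔ IsMinLoopWord m.reverse := by
  unfold RMin IsMinLoopWord
  simp only [List.Chain']; rw [List.isChain_reverse]
  simp [Function.flip_def]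

lemma rmin_nil : RMin ([] : List (V × V)) := ⟨by simp, List.isChain_nil⟩

lemma RMin.tail {y : V × V} {rest : List (V × V)} (h : RMin (y :: rest)) : RMin rest :=
  ⟨fun p hp => h.1 p (List.mem_cons_of_mem _ hp), h.2.tail⟩

lemma rmin_pushRev (m : List (V × V)) : RMin m → ∀ x, RMin (pushRev m x) := by
  induction m with
  | nil =>
    intro _ x
    by_cases hx : LinearIndependent ℝ ![x.1, x.2]
    · rw [pushRev_nil x hx]
      exact ⟨by simpa using hx, List.isChain_singleton x⟩
    · rw [pushRev_neg _ x hx]; exact rmin_nil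
  | cons y rest ih =>
    intro hm x
    by_cases hx : LinearIndependent ℝ ![x.1, x.2]
    · by_cases hc : y.2 = x.1 ∧ ¬ LinearIndependent ℝ ![y.2 - y.1, x.2 - x.1]
      · rw [pushRev_combine rest hx hc.1 hc.2]
        exact ih hm.tail _
      · rw [pushRev_keep rest hx hc]
        refine ⟨?_, ?_⟩
        · intro p hp
          rcases List.mem_cons.1 hp with rfl | hp
          · exact hx
          · exact hm.1 p hp
        · rw [List.Chain', List.isChain_cons_cons]
          refine ⟨?_, hm.2⟩
          rw [not_and_or, not_not] at hc
          exact hc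
    · rw [pushRev_neg _ x hx]; exact hm

lemma pushRev_of_rmin_cons {x : V × V} {m : List (V × V)} (h : RMin (x :: m)) :
    pushRev m x = x :: m := by
  have hx : LinearIndependent ℝ ![x.1, x.2] := h.1 x List.mem_cons_self
  cases m with
  | nil => exact pushRev_nil x hx
  | cons y rest =>
    have hchain := List.isChain_cons_cons.1 h.2
    refine pushRev_keep rest hx ?_
    rw [not_and_or, not_not]
    exact hchain.1

lemma pushRev_comp_easy (m : List (V × V)) {v u r : V}
    (hcol : Collinear ℝ ({v, u, r} : Set V))
    (h : ¬ (LinearIndependent ℝ ![v, u] ∧ LinearIndependent ℝ ![u, r])) :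
    pushRev (pushRev m (v, u)) (u, r) = pushRev m (v, r) := by
  by_cases hvu : LinearIndependent ℝ ![v, u]
  · have hur : ¬ LinearIndependent ℝ ![u, r] := fun h' => h ⟨hvu, h'⟩
    have hru : r = u := eq_of_li_dep hvu hur hcol
    rw [hru, pushRev_neg (pushRev m (v, u)) (u, u) (dep_self u)]
  · rw [pushRev_neg m (v, u) hvu]
    by_cases hur : LinearIndependent ℝ ![u, r]
    · rw [eq_of_dep_li hvu hur hcol]
    · rw [pushRev_neg m (u, r) hur, pushRev_neg m (v, r) (dep_dep hvu hur hcol)]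

lemma pushRev_comp (m : List (V × V)) : RMin m → ∀ v u r : V,
    Collinear ℝ ({v, u, r} : Set V) →
    pushRev (pushRev m (v, u)) (u, r) = pushRev m (v, r) := by
  induction m with
  | nil =>
    intro _ v u r hcol
    by_cases h : LinearIndependent ℝ ![v, u] ∧ LinearIndependent ℝ ![u, r]
    · rw [pushRev_nil (v, u) h.1,
        pushRev_combine (y := (v, u)) (x := (u, r)) [] h.2 rfl (collinear_dep hcol)]
    · exact pushRev_comp_easy [] hcol h
  | cons y rest ih =>
    intro hm v u r hcol
    by_cases h : LinearIndependent ℝ ![v, u] ∧ LinearIndependent ℝ ![u, r]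
    · obtain ⟨hvu, hur⟩ := h
      have hne : v ≠ u := by
        intro he; rw [he] at hvu; exact dep_self u hvu
      by_cases hc : y.2 = v ∧ ¬ LinearIndependent ℝ ![y.2 - y.1, u - v]
      · -- combine case
        have h2 := hc.2
        rw [hc.1] at h2
        have hcol1 : Collinear ℝ ({y.1, v, u} : Set V) := collinear_of_dep h2
        have hcol4 := collinear4 hcol1 hcol hne
        have hcolpur : Collinear ℝ ({y.1, u, r} : Set V) :=
          hcol4.subset (by intro z hz; simp only [Set.mem_insert_iff, Set.mem_singleton_iff] at hz ⊢; tauto)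
        rw [pushRev_combine (y := y) (x := (v, u)) rest hvu hc.1 hc.2,
          ih hm.tail y.1 u r hcolpur]
        by_cases hvr : LinearIndependent ℝ ![v, r]
        · have hcolpvr : Collinear ℝ ({y.1, v, r} : Set V) :=
            hcol4.subset (by intro z hz; simp only [Set.mem_insert_iff, Set.mem_singleton_iff] at hz ⊢; tauto)
          rw [pushRev_combine (y := y) (x := (v, r)) rest hvr hc.1
            (by rw [hc.1]; exact collinear_dep hcolpvr)]
        · have hrv : r = v := by
            refine eq_of_li_dep (li_symm hvu) hvr ?_
            exact hcol.subset (by intro z hz; simp only [Set.mem_insert_iff, Set.mem_singleton_iff] at hz ⊢; tauto)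
          rw [hrv, pushRev_neg (y :: rest) (v, v) (dep_self v)]
          have hy : (y.1, v) = y := by rw [← hc.1]
          rw [hy]
          exact pushRev_of_rmin_cons hm
      · -- keep case
        rw [pushRev_keep (y := y) (x := (v, u)) rest hvu hc,
          pushRev_combine (y := (v, u)) (x := (u, r)) (y :: rest) hur rfl (collinear_dep hcol)]
    · exact pushRev_comp_easy _ hcol h


lemma rmin_foldl (l : List (V × V)) : ∀ m, RMin m → RMin (List.foldl pushRev m l) := by
  induction l with
  | nil => intro m hm; exact hm
  | cons x l ih =>
    intro m hm
    exact ih _ (rmin_pushRev m hm x)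

lemma foldl_invariant {w₁ w₂ : FreeMonoid (V × V)} (h : ConGen.Rel (LoopRel V) w₁ w₂) :
    ∀ m, RMin m → List.foldl pushRev m w₁.toList = List.foldl pushRev m w₂.toList := by
  induction h with
  | of a b hab =>
    intro m hm
    cases hab with
    | comp v u r hcol =>
      show List.foldl pushRev m [(v, u), (u, r)] = List.foldl pushRev m [(v, r)]
      exact pushRev_comp m hm v u r hcol
    | triv v u hdep =>
      show List.foldl pushRev m [(v, u)] = List.foldl pushRev m []
      exact pushRev_neg m (v, u) hdep
  | refl w => intro m _; rfl
  | symm _ ih => intro m hm; exact (ih m hm).symm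
  | trans _ _ ih1 ih2 => intro m hm; exact (ih1 m hm).trans (ih2 m hm)
  | mul _ _ ih1 ih2 =>
    intro m hm
    rw [toList_mul, toList_mul, List.foldl_append, List.foldl_append, ih1 m hm,
      ih2 _ (rmin_foldl _ m hm)]

lemma loopmk_rel {a b : FreeMonoid (V × V)} (h : LoopRel V a b) : Loopmk a = Loopmk b :=
  Con.eq _ |>.2 (ConGen.Rel.of a b h)

lemma loopmk_pushRev (m : List (V × V)) : ∀ x : V × V,
    Loopmk (ofList (pushRev m x).reverse) = Loopmk (ofList m.reverse) * Loopmk (of x) := by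
  induction m with
  | nil =>
    intro x
    by_cases hx : LinearIndependent ℝ ![x.1, x.2]
    · rw [pushRev_nil x hx]
      simp
    · rw [pushRev_neg [] x hx]
      have : Loopmk (of x) = 1 := by
        have := loopmk_rel (LoopRel.triv x.1 x.2 hx)
        simpa using this
      rw [this, mul_one]
  | cons y rest ih =>
    intro x
    by_cases hx : LinearIndependent ℝ ![x.1, x.2]
    · by_cases hc : y.2 = x.1 ∧ ¬ LinearIndependent ℝ ![y.2 - y.1, x.2 - x.1]
      · rw [pushRev_combine (y := y) (x := x) rest hx hc.1 hc.2, ih (y.1, x.2)]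
        have hcol : Collinear ℝ ({y.1, y.2, x.2} : Set V) := by
          have h2 := hc.2
          rw [← hc.1] at h2
          exact collinear_of_dep h2
        have hrel : Loopmk (of (y.1, y.2) * of (y.2, x.2)) = Loopmk (of (y.1, x.2)) :=
          loopmk_rel (LoopRel.comp y.1 y.2 x.2 hcol)
        have hy : (y.1, y.2) = y := rfl
        have hx2 : (y.2, x.2) = x := by rw [hc.1]
        rw [hy, hx2] at hrel
        rw [← hrel, map_mul, List.reverse_cons, ofList_append, map_mul, ofList_singleton,
          mul_assoc]
      · rw [pushRev_keep (y := y) (x := x) rest hx hc]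
        rw [List.reverse_cons, ofList_append, map_mul, ofList_singleton]
    · rw [pushRev_neg (y :: rest) x hx]
      have : Loopmk (of x) = 1 := by
        have := loopmk_rel (LoopRel.triv x.1 x.2 hx)
        simpa using this
      rw [this, mul_one]

lemma loopmk_foldl (l : List (V × V)) : ∀ m : List (V × V),
    Loopmk (ofList (List.foldl pushRev m l).reverse) =
      Loopmk (ofList m.reverse) * Loopmk (ofList l) := by
  induction l with
  | nil => intro m; simp
  | cons x l ih =>
    intro m
    show Loopmk (ofList (List.foldl pushRev (pushRev m x) l).reverse) = _
    rw [ih (pushRev m x), loopmk_pushRev m x]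
    have : (ofList (x :: l) : FreeMonoid (V × V)) = of x * ofList l := rfl
    rw [this, map_mul, mul_assoc]

lemma isMin_prefix {l : List (V × V)} {x : V × V} (h : IsMinLoopWord (l ++ [x])) :
    IsMinLoopWord l :=
  ⟨fun p hp => h.1 p (by simp [hp]), h.2.prefix ⟨[x], rfl⟩⟩

lemma foldl_self (l : List (V × V)) (h : IsMinLoopWord l) :
    List.foldl pushRev [] l = l.reverse := by
  induction l using List.reverseRecOn with
  | nil => rfl
  | append_singleton l x ih =>
    rw [List.foldl_append, List.foldl_cons, List.foldl_nil, ih (isMin_prefix h),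
      List.reverse_append]
    have hr : RMin (x :: l.reverse) := by
      rw [rmin_iff]
      simpa using h
    rw [pushRev_of_rmin_cons hr]
    rfl


/-- Unique minimal representatives in `Loop(V)`. -/
theorem loopGrp_exists_unique_minimal_representative [FiniteDimensional ℝ V]
    (x : LoopGrp V) :
    ∃! l : List (V × V), IsMinLoopWord l ∧ Loopmk (FreeMonoid.ofList l) = x := by
  obtain ⟨w, rfl⟩ := Con.mk'_surjective (c := conGen (LoopRel V)) x
  refine ⟨(List.foldl pushRev [] w.toList).reverse, ⟨?_, ?_⟩, ?_⟩
  · exact rmin_iff.1 (rmin_foldl w.toList [] rmin_nil)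
  · rw [loopmk_foldl w.toList []]
    simp [ofList_toList]
  · rintro l' ⟨hmin, heq⟩
    have hrel : ConGen.Rel (LoopRel V) (ofList l') w := (Con.eq _).1 heq
    have := foldl_invariant hrel [] rmin_nil
    rw [toList_ofList, foldl_self l' hmin] at this
    rw [← this, List.reverse_reverse]
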